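/- Let Q be a 3×3 real transition rate matrix with stationary probability row vector μ, and let Π be a 3×K state-dependent probability matrix with columns φ_k and Λ_k = diag(φ_k). If the underlying Markov process is reversible, i.e. μ_i·Q_{ij} = μ_j·Q_{ji} for all i, j, then the observed process is reversible: for every r ≥ 1, every sequence of observation symbols s_1, …, s_r and all times t_2, …, t_r ≥ 0, μ·Λ_{s_1}·exp(t_2 Q)·Λ_{s_2}·exp(t_3 Q)·⋯·exp(t_r Q)·Λ_{s_r}·e = μ·Λ_{s_r}·exp(t_r Q)·Λ_{s_{r−1}}·exp(t_{r−1} Q)·⋯·exp(t_2 Q)·Λ_{s_1}·e. -/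

import Mathlib

open Matrix

/-- The matrix product `Λ_{s₀} · exp(t₀Q) · Λ_{s₁} · ⋯ · exp(t_{r−1}Q) · Λ_{s_r}`
appearing in the finite-dimensional distributions of the observed process of a
continuous-time hidden Markov model with transition rate matrix `Q` and
state-dependent probability matrix `E`. -/
noncomputable def obsProd (Q : Matrix (Fin 3) (Fin 3) ℝ) {K : ℕ}
    (E : Matrix (Fin 3) (Fin K) ℝ) {r : ℕ} (s : Fin (r + 1) → Fin K)
    (t : Fin r → ℝ) : Matrix (Fin 3) (Fin 3) ℝ :=
  Matrix.diagonal (fun a => E a (s 0)) *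
    (List.ofFn fun i : Fin r =>
      NormedSpace.exp (t i • Q) * Matrix.diagonal fun a => E a (s i.succ)).prod

/-- Peeling off the last two factors of `obsProd`. -/
lemma obsProd_succ_last (Q : Matrix (Fin 3) (Fin 3) ℝ) {K : ℕ}
    (E : Matrix (Fin 3) (Fin K) ℝ) {r : ℕ} (s : Fin (r + 2) → Fin K)
    (t : Fin (r + 1) → ℝ) :
    obsProd Q E s t =
      obsProd Q E (s ∘ Fin.castSucc) (t ∘ Fin.castSucc) *
        (NormedSpace.exp (t (Fin.last r) • Q) *
          Matrix.diagonal fun a => E a (s (Fin.last (r + 1)))) := by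
  unfold obsProd
  rw [List.ofFn_succ']
  simp only [List.concat_eq_append, List.prod_append, List.prod_cons, List.prod_nil,
    Function.comp_apply, mul_one, ← mul_assoc, Fin.succ_castSucc, Fin.castSucc_zero,
    Fin.succ_last]

/-- Peeling off the first two factors of `obsProd`. -/
lemma obsProd_succ_head (Q : Matrix (Fin 3) (Fin 3) ℝ) {K : ℕ}
    (E : Matrix (Fin 3) (Fin K) ℝ) {r : ℕ} (s : Fin (r + 2) → Fin K)
    (t : Fin (r + 1) → ℝ) :
    obsProd Q E s t =
      Matrix.diagonal (fun a => E a (s 0)) * NormedSpace.exp (t 0 • Q) *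
        obsProd Q E (s ∘ Fin.succ) (t ∘ Fin.succ) := by
  unfold obsProd
  rw [List.ofFn_succ]
  simp only [List.prod_cons, Function.comp_apply, ← mul_assoc]

theorem observed_reversible_of_reversible
    (Q : Matrix (Fin 3) (Fin 3) ℝ) (μ : Fin 3 → ℝ)
    {K : ℕ} (E : Matrix (Fin 3) (Fin K) ℝ)
    (hoff : ∀ i j : Fin 3, i ≠ j → 0 ≤ Q i j)
    (hrow : ∀ i : Fin 3, ∑ j, Q i j = 0)
    (hpos : ∀ i, 0 < μ i) (hsum : μ 0 + μ 1 + μ 2 = 1)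
    (hstat : μ ᵥ* Q = 0)
    (hE0 : ∀ a k, 0 ≤ E a k) (hE1 : ∀ a : Fin 3, ∑ k, E a k = 1)
    (hrev : ∀ i j : Fin 3, μ i * Q i j = μ j * Q j i) :
    ∀ (r : ℕ) (s : Fin (r + 1) → Fin K) (t : Fin r → ℝ), (∀ i, 0 ≤ t i) →
      (μ ᵥ* obsProd Q E s t) ⬝ᵥ (fun _ => (1 : ℝ)) =
        (μ ᵥ* obsProd Q E (s ∘ Fin.rev) (t ∘ Fin.rev)) ⬝ᵥ (fun _ => (1 : ℝ)) := by
  classical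
  set D : Matrix (Fin 3) (Fin 3) ℝ := Matrix.diagonal μ with hDdef
  -- D is invertible
  have hDunit : IsUnit D := by
    rw [Matrix.isUnit_iff_isUnit_det]
    simp only [hDdef, Matrix.det_diagonal, isUnit_iff_ne_zero]
    exact Finset.prod_ne_zero_iff.2 fun i _ => (hpos i).ne'
  -- detailed balance at the matrix level
  have hDQ : D * Q = Qᵀ * D := by
    ext i j
    simp [hDdef, Matrix.mul_apply, Matrix.diagonal, Finset.sum_ite_eq, Finset.sum_ite_eq',
      Matrix.transpose_apply]
    rw [mul_comm (Q j i) (μ j)]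
    exact hrev i j
  -- D commutes-with-transpose past matrix exponentials
  have hDexp : ∀ τ : ℝ, D * NormedSpace.exp (τ • Q) = (NormedSpace.exp (τ • Q))ᵀ * D := by
    intro τ
    have hDA : D * (τ • Q) = (τ • Q)ᵀ * D := by
      rw [Matrix.transpose_smul, Matrix.mul_smul, Matrix.smul_mul, hDQ]
    obtain ⟨u, hu⟩ := hDunit
    have h1 : (↑u : Matrix _ _ ℝ) * (τ • Q) * (↑u⁻¹ : Matrix _ _ ℝ) = (τ • Q)ᵀ := by
      rw [hu, hDA, Matrix.mul_assoc, ← hu]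
      rw [Units.mul_inv, mul_one]
    have h2 := Matrix.exp_units_conj u (τ • Q)
    rw [h1, Matrix.exp_transpose] at h2
    have h3 : (NormedSpace.exp (τ • Q))ᵀ * D = (↑u : Matrix _ _ ℝ) * NormedSpace.exp (τ • Q) := by
      rw [h2, ← hu, Matrix.mul_assoc, Matrix.mul_assoc]
      rw [Units.inv_mul, mul_one]
    rw [h3, hu]
  -- D commutes-with-transpose past diagonal matrices
  have hDdiag : ∀ v : Fin 3 → ℝ, D * Matrix.diagonal v = (Matrix.diagonal v)ᵀ * D := by
    intro v
    rw [Matrix.diagonal_transpose, hDdef, Matrix.diagonal_mul_diagonal,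
      Matrix.diagonal_mul_diagonal]
    have : (fun i => μ i * v i) = fun i => v i * μ i := funext fun i => mul_comm _ _
    rw [this]
  -- Key lemma: D * obsProd s t = (obsProd (s ∘ rev) (t ∘ rev))ᵀ * D
  have key : ∀ (r : ℕ) (s : Fin (r + 1) → Fin K) (t : Fin r → ℝ),
      D * obsProd Q E s t = (obsProd Q E (s ∘ Fin.rev) (t ∘ Fin.rev))ᵀ * D := by
    intro r
    induction r with
    | zero =>
      intro s t
      have hs : (s ∘ Fin.rev) = s := by
        funext i
        have h1 := i.isLt
        have h2 := (Fin.rev i).isLt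
        have : Fin.rev i = i := Fin.ext (by omega)
        simp [this]
      rw [hs]
      unfold obsProd
      simp only [List.ofFn_zero, List.prod_nil, mul_one]
      exact hDdiag _
    | succ n ih =>
      intro s t
      rw [obsProd_succ_last Q E s t]
      have step1 : D * (obsProd Q E (s ∘ Fin.castSucc) (t ∘ Fin.castSucc) *
          (NormedSpace.exp (t (Fin.last n) • Q) *
            Matrix.diagonal fun a => E a (s (Fin.last (n + 1))))) =
          (obsProd Q E ((s ∘ Fin.castSucc) ∘ Fin.rev) ((t ∘ Fin.castSucc) ∘ Fin.rev))ᵀ *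
            ((NormedSpace.exp (t (Fin.last n) • Q))ᵀ *
              ((Matrix.diagonal fun a => E a (s (Fin.last (n + 1))))ᵀ * D)) := by
        calc D * (obsProd Q E (s ∘ Fin.castSucc) (t ∘ Fin.castSucc) *
              (NormedSpace.exp (t (Fin.last n) • Q) *
                Matrix.diagonal fun a => E a (s (Fin.last (n + 1)))))
            = (D * obsProd Q E (s ∘ Fin.castSucc) (t ∘ Fin.castSucc)) *
              (NormedSpace.exp (t (Fin.last n) • Q)) *
              (Matrix.diagonal fun a => E a (s (Fin.last (n + 1)))) := by
              simp only [Matrix.mul_assoc]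
          _ = (obsProd Q E ((s ∘ Fin.castSucc) ∘ Fin.rev) ((t ∘ Fin.castSucc) ∘ Fin.rev))ᵀ *
              (D * NormedSpace.exp (t (Fin.last n) • Q)) *
              (Matrix.diagonal fun a => E a (s (Fin.last (n + 1)))) := by
              rw [ih]; simp only [Matrix.mul_assoc]
          _ = (obsProd Q E ((s ∘ Fin.castSucc) ∘ Fin.rev) ((t ∘ Fin.castSucc) ∘ Fin.rev))ᵀ *
              ((NormedSpace.exp (t (Fin.last n) • Q))ᵀ *
                (D * (Matrix.diagonal fun a => E a (s (Fin.last (n + 1)))))) := by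
              rw [hDexp]; simp only [Matrix.mul_assoc]
          _ = _ := by rw [hDdiag]
      rw [step1]
      -- now identify the RHS with (obsProd reversed)ᵀ * D
      have hrhs : obsProd Q E (s ∘ Fin.rev) (t ∘ Fin.rev) =
          (Matrix.diagonal fun a => E a (s (Fin.last (n + 1)))) *
            NormedSpace.exp (t (Fin.last n) • Q) *
            obsProd Q E ((s ∘ Fin.castSucc) ∘ Fin.rev) ((t ∘ Fin.castSucc) ∘ Fin.rev) := by
        rw [obsProd_succ_head Q E (s ∘ Fin.rev) (t ∘ Fin.rev)]
        have h1 : (s ∘ Fin.rev) 0 = s (Fin.last (n + 1)) := by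
          simp [Fin.rev_zero]
        have h2 : (t ∘ Fin.rev) 0 = t (Fin.last n) := by
          simp [Fin.rev_zero]
        have h3 : (s ∘ Fin.rev) ∘ Fin.succ = (s ∘ Fin.castSucc) ∘ Fin.rev := by
          funext i
          simp [Function.comp, Fin.rev_succ]
        have h4 : (t ∘ Fin.rev) ∘ Fin.succ = (t ∘ Fin.castSucc) ∘ Fin.rev := by
          funext i
          simp [Function.comp, Fin.rev_succ]
        rw [h1, h2, h3, h4]
      rw [hrhs]
      simp only [Matrix.transpose_mul, Matrix.mul_assoc]
  -- conclude: sum all entries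
  intro r s t _
  have hkey := key r s t
  have entry : ∀ i j, μ i * obsProd Q E s t i j =
      μ j * obsProd Q E (s ∘ Fin.rev) (t ∘ Fin.rev) j i := by
    intro i j
    have h1 : (D * obsProd Q E s t) i j = μ i * obsProd Q E s t i j := by
      simp [hDdef, Matrix.diagonal_mul]
    have h2 : ((obsProd Q E (s ∘ Fin.rev) (t ∘ Fin.rev))ᵀ * D) i j =
        μ j * obsProd Q E (s ∘ Fin.rev) (t ∘ Fin.rev) j i := by
      simp [hDdef, Matrix.mul_diagonal, Matrix.transpose_apply, mul_comm]
    rw [← h1, ← h2, hkey]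
  simp only [dotProduct, Matrix.vecMul, dotProduct, mul_one]
  rw [Finset.sum_comm]
  refine Finset.sum_congr rfl fun j _ => Finset.sum_congr rfl fun i _ => ?_
  exact entry j i
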